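/- Let D be a bipartite tournament. There exists a tournament completion of D with no augmented (2,1)-dicycles if and only if D is acyclic. -/

import Mathlib

/-- `f` gives the partite set (as a `Bool`) of each vertex; `A` is the arc relation.
`IsBipTournament f A` says `A` is an orientation of the complete bipartite graph with
(nonempty) partite sets `f ⁻¹ true` and `f ⁻¹ false`. -/
def IsBipTournament {V : Type*} (f : V → Bool) (A : V → V → Prop) : Prop :=
  (∃ v, f v = true) ∧ (∃ v, f v = false) ∧
  (∀ u v, f u = f v → ¬ A u v) ∧ (∀ u v, f u ≠ f v → (A u v ↔ ¬ A v u))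

/-- `T` is a tournament (on the whole vertex type). -/
def IsTournament {V : Type*} (T : V → V → Prop) : Prop :=
  (∀ v, ¬ T v v) ∧ ∀ u v, u ≠ v → (T u v ↔ ¬ T v u)

/-- `T` is a tournament completion of the digraph with arc relation `A`. -/
def IsCompletion {V : Type*} (A T : V → V → Prop) : Prop :=
  IsTournament T ∧ ∀ u v, A u v → T u v
/-- Cyclic successor in `Fin k`. -/
def cyc {k : ℕ} (i : Fin k) : Fin k :=
  ⟨(i.val + 1) % k, Nat.mod_lt _ (lt_of_le_of_lt (Nat.zero_le _) i.isLt)⟩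

/-- `c` lists the vertices of a directed cycle of length `k` in the digraph `A`. -/
def IsDicycle {V : Type*} (A : V → V → Prop) (k : ℕ) (c : Fin k → V) : Prop :=
  2 ≤ k ∧ Function.Injective c ∧ ∀ i, A (c i) (c (cyc i))

/-- The digraph `A` has no directed cycle. -/
def Acyclic {V : Type*} (A : V → V → Prop) : Prop :=
  ¬ ∃ (k : ℕ) (c : Fin k → V), IsDicycle A k c
/-- `c` is an augmented `(2,1)`-dicycle of the completion `T` of the bipartite
tournament `(f, A)`: a directed 3-cycle of `T` using at least one arc not in `A`,
whose three vertices do not all lie in one partite set (hence exactly two in one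
partite set and one in the other). -/
def Aug21 {V : Type*} (f : V → Bool) (A T : V → V → Prop) (c : Fin 3 → V) : Prop :=
  Function.Injective c ∧ (∀ i, T (c i) (c (i + 1))) ∧
  (∃ i, ¬ A (c i) (c (i + 1))) ∧ ¬ (f (c 0) = f (c 1) ∧ f (c 1) = f (c 2))


lemma no_closed_walk {V : Type*} {A : V → V → Prop}
    (hA : Acyclic A) (hirr : ∀ v, ¬ A v v) :
    ∀ n, 2 ≤ n → ∀ g : Fin n → V, ¬ (∀ i, A (g i) (g (cyc i))) := by
  intro n
  induction n using Nat.strong_induction_on with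
  | _ n IH =>
  intro hn g hg
  have harc : ∀ (s u : ℕ) (hs : s < n) (hu : u < n), u = (s + 1) % n →
      A (g ⟨s, hs⟩) (g ⟨u, hu⟩) := by
    intro s u hs hu he
    have hcyc : (⟨u, hu⟩ : Fin n) = cyc ⟨s, hs⟩ := Fin.ext (by simp [cyc, he])
    rw [hcyc]; exact hg _
  by_cases hinj : Function.Injective g
  · exact hA ⟨n, g, hn, hinj, hg⟩
  · simp only [Function.Injective, not_forall] at hinj
    obtain ⟨i, j, hij, hne⟩ := hinj
    wlog hlt : i.val < j.val generalizing i j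
    · have hlt' : j.val < i.val := by
        have := Fin.val_ne_of_ne hne; omega
      exact this j i hij.symm (Ne.symm hne) hlt'
    by_cases hm : j.val - i.val = 1
    · have := harc i.val j.val i.isLt j.isLt (by rw [Nat.mod_eq_of_lt (by omega)]; omega)
      rw [show (⟨i.val, i.isLt⟩ : Fin n) = i from rfl,
          show (⟨j.val, j.isLt⟩ : Fin n) = j from rfl, ← hij] at this
      exact hirr _ this
    · set m := j.val - i.val with hmdef
      have hm2 : 2 ≤ m := by omega
      have hmn : m < n := by omega
      apply IH m hmn hm2 (fun t => g ⟨i.val + t.val, by omega⟩)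
      intro t
      show A (g ⟨i.val + t.val, by omega⟩) (g ⟨i.val + (cyc t).val, by omega⟩)
      by_cases ht : t.val + 1 < m
      · have e2 : (⟨i.val + (cyc t).val, by omega⟩ : Fin n) = ⟨i.val + t.val + 1, by omega⟩ :=
          Fin.ext (by simp [cyc, Nat.mod_eq_of_lt ht]; omega)
        rw [e2]
        exact harc _ _ _ _ (by rw [Nat.mod_eq_of_lt (by omega)])
      · have ht' : t.val + 1 = m := by omega
        have e2 : (⟨i.val + (cyc t).val, by omega⟩ : Fin n) = i :=
          Fin.ext (by simp [cyc, ht'])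
        rw [e2, hij]
        exact harc _ j.val _ j.isLt (by rw [Nat.mod_eq_of_lt (by omega)]; omega)

lemma no_transGen_loop {V : Type*} {A : V → V → Prop}
    (hA : Acyclic A) (hirr : ∀ v, ¬ A v v) (a : V) : ¬ Relation.TransGen A a a := by
  intro ha
  obtain ⟨b, hab, hba⟩ := Relation.TransGen.head'_iff.mp ha
  obtain ⟨l, hchain, hlast⟩ := List.exists_isChain_cons_of_relationReflTransGen hba
  set w : List V := b :: l with hw
  have hchain' : w.Chain' A := hchain
  have hget := List.isChain_iff_getElem.mp hchain'
  -- w.length = l.length + 1 ≥ 1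
  rcases Nat.lt_or_ge w.length 2 with h2 | h2
  · -- l = [], so b = a
    have hl : l = [] := by
      have : w.length = l.length + 1 := by simp [hw]
      have : l.length = 0 := by omega
      exact List.length_eq_zero_iff.mp this
    subst hl
    simp [hw] at hlast
    subst hlast
    exact hirr _ hab
  · apply no_closed_walk hA hirr w.length h2 (fun t => w.get t)
    intro t
    show A (w.get t) (w.get (cyc t))
    by_cases ht : t.val + 1 < w.length
    · have e : cyc t = ⟨t.val + 1, ht⟩ := Fin.ext (by simp [cyc, Nat.mod_eq_of_lt ht])
      rw [e]
      exact hget t.val (by omega)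
    · have ht' : t.val + 1 = w.length := by omega
      have e : cyc t = ⟨0, by omega⟩ := Fin.ext (by simp [cyc, ht'])
      rw [e]
      have e0 : w.get ⟨0, by omega⟩ = b := rfl
      have elast : w.get t = a := by
        have : w.get t = w.getLast (by simp [hw]) := by
          rw [List.getLast_eq_getElem, List.get_eq_getElem]
          congr 1
          omega
        rw [this]
        exact hlast
      rw [e0, elast]
      exact hab

lemma mk_aug {V : Type*} (f : V → Bool) (A T : V → V → Prop) (a b c : V)
    (hab : a ≠ b) (hac : a ≠ c) (hbc : b ≠ c)
    (t1 : T a b) (t2 : T b c) (t3 : T c a)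
    (hA : ¬ A a b ∨ ¬ A b c ∨ ¬ A c a)
    (hf : ¬ (f a = f b ∧ f b = f c)) : Aug21 f A T ![a, b, c] := by
  refine ⟨?_, ?_, ?_, ?_⟩
  · intro x y hxy; fin_cases x <;> fin_cases y <;> simp_all
  · intro j; fin_cases j
    · simpa using t1
    · simpa using t2
    · simpa using t3
  · rcases hA with hh | hh | hh
    · exact ⟨0, by simpa using hh⟩
    · exact ⟨1, by simpa using hh⟩
    · exact ⟨2, by simpa using hh⟩
  · simpa using hf


/-- There exists a tournament completion of a bipartite tournament `D` with no
augmented `(2,1)`-dicycles iff `D` is acyclic. -/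
theorem stmt_5 {V : Type*} [Fintype V] (f : V → Bool) (A : V → V → Prop)
    (h : IsBipTournament f A) :
    (∃ T : V → V → Prop, IsCompletion A T ∧ ∀ c : Fin 3 → V, ¬ Aug21 f A T c) ↔
      Acyclic A := by
  obtain ⟨-, -, hNoSame, hOpp⟩ := h
  have hirr : ∀ v, ¬ A v v := fun v => hNoSame v v rfl
  constructor
  · rintro ⟨T, ⟨⟨hTirr, hTtot⟩, hComp⟩, hNoAug⟩ ⟨k, c, hk, hinj, harc⟩
    -- step arcs
    have hstepA : ∀ s : ℕ, ∀ hs : s + 1 < k, A (c ⟨s, by omega⟩) (c ⟨s + 1, hs⟩) := by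
      intro s hs
      have := harc ⟨s, by omega⟩
      have e : cyc (⟨s, by omega⟩ : Fin k) = ⟨s + 1, hs⟩ :=
        Fin.ext (by simp [cyc, Nat.mod_eq_of_lt hs])
      rwa [e] at this
    have hwrap : A (c ⟨k - 1, by omega⟩) (c ⟨0, by omega⟩) := by
      have := harc ⟨k - 1, by omega⟩
      have e : cyc (⟨k - 1, by omega⟩ : Fin k) = ⟨0, by omega⟩ :=
        Fin.ext (by simp [cyc, Nat.sub_add_cancel (by omega : 1 ≤ k)])
      rwa [e] at this
    have hstepf : ∀ s : ℕ, ∀ hs : s + 1 < k, f (c ⟨s, by omega⟩) ≠ f (c ⟨s + 1, hs⟩) := by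
      intro s hs he
      exact hNoSame _ _ he (hstepA s hs)
    have hcne : ∀ (s u : ℕ) (hs : s < k) (hu : u < k), s ≠ u →
        c ⟨s, hs⟩ ≠ c ⟨u, hu⟩ := by
      intro s u hs hu hne he
      exact hne (by simpa [Fin.ext_iff] using hinj he)
    have key : ∀ i : ℕ, 1 ≤ i → ∀ hi : i < k, T (c ⟨0, by omega⟩) (c ⟨i, hi⟩) := by
      intro i h1i
      induction i, h1i using Nat.le_induction with
      | base => intro hi; exact hComp _ _ (hstepA 0 hi)
      | succ i hi1 IH =>
        intro hi'
        have hi : i < k := by omega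
        have hT0i : T (c ⟨0, by omega⟩) (c ⟨i, hi⟩) := IH hi
        have hTi : T (c ⟨i, hi⟩) (c ⟨i + 1, hi'⟩) := hComp _ _ (hstepA i hi')
        by_contra hTnot
        have hT10 : T (c ⟨i + 1, hi'⟩) (c ⟨0, by omega⟩) :=
          (hTtot _ _ (hcne _ _ _ _ (by omega))).mpr hTnot
        have hfii : f (c ⟨i, hi⟩) ≠ f (c ⟨i + 1, hi'⟩) := hstepf i hi'
        apply hNoAug _ (mk_aug f A T (c ⟨0, by omega⟩) (c ⟨i, hi⟩) (c ⟨i + 1, hi'⟩)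
          (hcne _ _ _ _ (by omega)) (hcne _ _ _ _ (by omega)) (hcne _ _ _ _ (by omega))
          hT0i hTi hT10 ?_ ?_)
        · by_cases hf0 : f (c ⟨0, by omega⟩) = f (c ⟨i, hi⟩)
          · exact Or.inl (hNoSame _ _ hf0)
          · refine Or.inr (Or.inr (hNoSame _ _ ?_))
            have hbool : ∀ a b c2 : Bool, a ≠ b → b ≠ c2 → c2 = a := by decide
            exact hbool _ _ _ hf0 hfii
        · rintro ⟨-, e2⟩
          exact hfii e2
      
    have hTlast := key (k - 1) (by omega) (by omega)
    have hTwrap := hComp _ _ hwrap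
    exact (hTtot _ _ (hcne _ _ _ _ (by omega))).mp hTlast hTwrap
  · intro hAcyc
    have hnl := no_transGen_loop hAcyc hirr
    haveI : IsPartialOrder V (Relation.ReflTransGen A) :=
      { refl := fun a => Relation.ReflTransGen.refl
        trans := fun a b c => Relation.ReflTransGen.trans
        antisymm := by
          intro a b hab hba
          by_contra hne
          rcases Relation.reflTransGen_iff_eq_or_transGen.mp hab with h1 | h1
          · exact hne h1.symm
          rcases Relation.reflTransGen_iff_eq_or_transGen.mp hba with h2 | h2
          · exact hne h2
          exact hnl a (h1.trans h2) }
    obtain ⟨s, hs, hsub⟩ := extend_partialOrder (Relation.ReflTransGen A)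
    haveI := hs
    refine ⟨fun u v => s u v ∧ u ≠ v, ⟨⟨fun v hv => hv.2 rfl, ?_⟩, ?_⟩, ?_⟩
    · intro u v hne
      constructor
      · rintro ⟨h1, -⟩ ⟨h2, -⟩
        exact hne (antisymm h1 h2)
      · intro hnvu
        refine ⟨?_, hne⟩
        rcases total_of s u v with h1 | h1
        · exact h1
        · exact absurd ⟨h1, hne.symm⟩ hnvu
    · intro u v hAuv
      exact ⟨hsub u v (Relation.ReflTransGen.single hAuv),
        fun e => hirr v (e ▸ hAuv)⟩
    · rintro c ⟨hcinj, hcT, -, -⟩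
      have h01 := (hcT 0).1
      have h12 := (hcT 1).1
      have h20 := (hcT 2).1
      have e0 : (0 + 1 : Fin 3) = 1 := rfl
      have e1 : (1 + 1 : Fin 3) = 2 := rfl
      have e2 : (2 + 1 : Fin 3) = 0 := rfl
      rw [e0] at h01; rw [e1] at h12; rw [e2] at h20
      have h02 : s (c 0) (c 2) := _root_.trans h01 h12
      have : c 0 = c 2 := antisymm h02 h20
      have := hcinj this
      simp at this
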